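/- Every algebra automorphism of the 3-dimensional complex algebra with single nonzero product e₁e₂ = e₃ (the algebra B³*₀₄(0)) has matrix of the form [[x,0,0],[0,y,0],[z,t,xy]] with x,y ∈ ℂ*, z,t ∈ ℂ, with respect to the basis e₁,e₂,e₃, and conversely all such matrices give automorphisms. -/

import Mathlib

noncomputable def mB3s040 : (Fin 3 → ℂ) →ₗ[ℂ] (Fin 3 → ℂ) →ₗ[ℂ] (Fin 3 → ℂ) :=
  LinearMap.mk₂ ℂ (fun u v => ![0, 0, u 0 * v 1])
    (fun x y v => by funext i; fin_cases i <;> simp <;> ring)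
    (fun a x v => by funext i; fin_cases i <;> simp <;> ring)
    (fun u x y => by funext i; fin_cases i <;> simp <;> ring)
    (fun u a x => by funext i; fin_cases i <;> simp <;> ring)

lemma mB3s040_apply (u v : Fin 3 → ℂ) : mB3s040 u v = ![0, 0, u 0 * v 1] := rfl

lemma decomp3 (u : Fin 3 → ℂ) :
    u = u 0 • (Pi.single 0 1 : Fin 3 → ℂ) + u 1 • (Pi.single 1 1 : Fin 3 → ℂ)
      + u 2 • (Pi.single 2 1 : Fin 3 → ℂ) := by
  funext i; fin_cases i <;> simp [Pi.single_apply]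

noncomputable def fmapB (x y z t : ℂ) : (Fin 3 → ℂ) →ₗ[ℂ] (Fin 3 → ℂ) where
  toFun u := ![x * u 0, y * u 1, z * u 0 + t * u 1 + x * y * u 2]
  map_add' u v := by funext i; fin_cases i <;> simp <;> ring
  map_smul' a u := by funext i; fin_cases i <;> simp <;> ring

lemma fmapB_apply (x y z t : ℂ) (u : Fin 3 → ℂ) :
    fmapB x y z t u = ![x * u 0, y * u 1, z * u 0 + t * u 1 + x * y * u 2] := rfl

/-- The automorphisms of the algebra with single nonzero product `e₁e₂ = e₃` are
exactly the linear maps with matrix `[[x,0,0],[0,y,0],[z,t,xy]]`, `x,y ≠ 0`. -/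
theorem B3s040_automorphisms :
    (∀ φ : (Fin 3 → ℂ) ≃ₗ[ℂ] (Fin 3 → ℂ),
      (∀ u v : Fin 3 → ℂ, φ (mB3s040 u v) = mB3s040 (φ u) (φ v)) ↔
      (∃ x y z t : ℂ, x ≠ 0 ∧ y ≠ 0 ∧
        φ ((Pi.single 0 1 : Fin 3 → ℂ)) = x • (Pi.single 0 1 : Fin 3 → ℂ) + z • (Pi.single 2 1 : Fin 3 → ℂ) ∧
        φ ((Pi.single 1 1 : Fin 3 → ℂ)) = y • (Pi.single 1 1 : Fin 3 → ℂ) + t • (Pi.single 2 1 : Fin 3 → ℂ) ∧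
        φ ((Pi.single 2 1 : Fin 3 → ℂ)) = (x * y) • (Pi.single 2 1 : Fin 3 → ℂ))) ∧
    (∀ x y z t : ℂ, x ≠ 0 → y ≠ 0 →
      ∃ φ : (Fin 3 → ℂ) ≃ₗ[ℂ] (Fin 3 → ℂ),
        (∀ u v : Fin 3 → ℂ, φ (mB3s040 u v) = mB3s040 (φ u) (φ v)) ∧
        φ ((Pi.single 0 1 : Fin 3 → ℂ)) = x • (Pi.single 0 1 : Fin 3 → ℂ) + z • (Pi.single 2 1 : Fin 3 → ℂ) ∧
        φ ((Pi.single 1 1 : Fin 3 → ℂ)) = y • (Pi.single 1 1 : Fin 3 → ℂ) + t • (Pi.single 2 1 : Fin 3 → ℂ) ∧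
        φ ((Pi.single 2 1 : Fin 3 → ℂ)) = (x * y) • (Pi.single 2 1 : Fin 3 → ℂ)) := by
  constructor
  · intro φ
    constructor
    · intro hmul
      set E1 : Fin 3 → ℂ := Pi.single 0 1 with hE1
      set E2 : Fin 3 → ℂ := Pi.single 1 1 with hE2
      set E3 : Fin 3 → ℂ := Pi.single 2 1 with hE3
      have hE12 : mB3s040 E1 E2 = E3 := by
        funext i; fin_cases i <;> simp [mB3s040_apply, hE1, hE2, hE3, Pi.single_apply]
      have h3 : φ E3 = ![0, 0, φ E1 0 * φ E2 1] := by
        rw [← hE12, hmul, mB3s040_apply]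
      have hE3ne : φ E3 ≠ 0 := by
        intro h
        have h0 : E3 = 0 := φ.injective (by rw [h, map_zero])
        have := congrFun h0 2
        simp [hE3] at this
      have haf : φ E1 0 * φ E2 1 ≠ 0 := by
        intro h0
        apply hE3ne
        rw [h3]; funext i; fin_cases i <;> simp [h0]
      have hx : φ E1 0 ≠ 0 := fun h => haf (by rw [h, zero_mul])
      have hy : φ E2 1 ≠ 0 := fun h => haf (by rw [h, mul_zero])
      have h11 : φ E1 1 = 0 := by
        have h := hmul E1 E1
        have h0 : mB3s040 E1 E1 = 0 := by
          funext i; fin_cases i <;> simp [mB3s040_apply, hE1, Pi.single_apply]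
        rw [h0, map_zero] at h
        have := congrFun h 2
        simp [mB3s040_apply] at this
        exact this.resolve_left hx
      have h22 : φ E2 0 = 0 := by
        have h := hmul E2 E2
        have h0 : mB3s040 E2 E2 = 0 := by
          funext i; fin_cases i <;> simp [mB3s040_apply, hE2, Pi.single_apply]
        rw [h0, map_zero] at h
        have := congrFun h 2
        simp [mB3s040_apply] at this
        exact this.resolve_right hy
      refine ⟨φ E1 0, φ E2 1, φ E1 2, φ E2 2, hx, hy, ?_, ?_, ?_⟩
      · funext i; fin_cases i <;> simp [hE1, hE3, Pi.single_apply, h11,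
          (by rw [hE1] at h11; exact h11 : φ (Pi.single 0 1) 1 = 0)]
      · funext i; fin_cases i <;> simp [hE2, hE3, Pi.single_apply, h22,
          (by rw [hE2] at h22; exact h22 : φ (Pi.single 1 1) 0 = 0)]
      · rw [h3]; funext i; fin_cases i <;> simp [hE3, Pi.single_apply]
    · rintro ⟨x, y, z, t, hx, hy, h1, h2, h3⟩ u v
      have hu : ∀ w : Fin 3 → ℂ, φ w = w 0 • φ (Pi.single 0 1) + w 1 • φ (Pi.single 1 1)
          + w 2 • φ (Pi.single 2 1) := by
        intro w
        conv_lhs => rw [decomp3 w]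
        simp
      have hu0 : ∀ w : Fin 3 → ℂ, φ w 0 = x * w 0 := by
        intro w
        rw [hu w, h1, h2, h3]
        simp [Pi.single_apply]
        ring
      have hv1 : ∀ w : Fin 3 → ℂ, φ w 1 = y * w 1 := by
        intro w
        rw [hu w, h1, h2, h3]
        simp [Pi.single_apply]
        ring
      have hmuv : mB3s040 u v = (u 0 * v 1) • (Pi.single 2 1 : Fin 3 → ℂ) := by
        funext i; fin_cases i <;> simp [mB3s040_apply, Pi.single_apply]
      rw [hmuv, map_smul, h3, mB3s040_apply]
      funext i; fin_cases i <;> simp [hu0, hv1, Pi.single_apply] <;> ring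
  · intro x y z t hx hy
    have hA : x * x⁻¹ = 1 := mul_inv_cancel₀ hx
    have hB : y * y⁻¹ = 1 := mul_inv_cancel₀ hy
    have hgf : (fmapB x y z t).comp
        (fmapB x⁻¹ y⁻¹ (-z * (x ^ 2 * y)⁻¹) (-t * (x * y ^ 2)⁻¹)) = LinearMap.id := by
      apply LinearMap.ext; intro u
      funext i
      fin_cases i <;> simp [fmapB_apply] <;> (try simp only [mul_inv, ← inv_pow])
      · linear_combination (u 0) * hA
      · linear_combination (u 1) * hB
      · linear_combination (y * y⁻¹ * (u 2 - z * x⁻¹ * u 0 - t * y⁻¹ * u 1)) * hA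
          + (u 2 - z * x⁻¹ * u 0 - t * y⁻¹ * u 1) * hB
    have hfg : (fmapB x⁻¹ y⁻¹ (-z * (x ^ 2 * y)⁻¹) (-t * (x * y ^ 2)⁻¹)).comp
        (fmapB x y z t) = LinearMap.id := by
      apply LinearMap.ext; intro u
      funext i
      fin_cases i <;> simp [fmapB_apply] <;> (try simp only [mul_inv, ← inv_pow])
      · linear_combination (u 0) * hA
      · linear_combination (u 1) * hB
      · linear_combination (-(z * u 0 * x⁻¹ * y⁻¹) + y * y⁻¹ * u 2) * hA
          + (-(t * u 1 * x⁻¹ * y⁻¹) + u 2) * hB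
    refine ⟨LinearEquiv.ofLinear (fmapB x y z t)
      (fmapB x⁻¹ y⁻¹ (-z * (x ^ 2 * y)⁻¹) (-t * (x * y ^ 2)⁻¹)) hgf hfg, ?_, ?_, ?_, ?_⟩
    · intro u v
      simp only [LinearEquiv.ofLinear_apply]
      funext i; fin_cases i <;> simp [fmapB_apply, mB3s040_apply] <;> ring
    · simp only [LinearEquiv.ofLinear_apply]
      funext i; fin_cases i <;> simp [fmapB_apply, Pi.single_apply]
    · simp only [LinearEquiv.ofLinear_apply]
      funext i; fin_cases i <;> simp [fmapB_apply, Pi.single_apply]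
    · simp only [LinearEquiv.ofLinear_apply]
      funext i; fin_cases i <;> simp [fmapB_apply, Pi.single_apply]
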